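/- The set {1, 2, 13} is a nonextendible P^3_1-set: there is no positive integer d not in {1, 2, 13} such that {1, 2, 13, d} is a P^3_1-set, i.e., such that the product of any three distinct elements of {1, 2, 13, d} increased by one is a perfect cube. -/

import Mathlib

@[ext] structure Eis where
  re : ℤ
  im : ℤ
deriving DecidableEq

namespace Eis

instance : Zero Eis := ⟨⟨0,0⟩⟩
instance : One Eis := ⟨⟨1,0⟩⟩
instance : Add Eis := ⟨fun a b => ⟨a.re+b.re, a.im+b.im⟩⟩
instance : Neg Eis := ⟨fun a => ⟨-a.re, -a.im⟩⟩
instance : Mul Eis := ⟨fun a b => ⟨a.re*b.re - a.im*b.im, a.re*b.im + a.im*b.re - a.im*b.im⟩⟩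

@[simp] lemma zero_re : (0 : Eis).re = 0 := rfl
@[simp] lemma zero_im : (0 : Eis).im = 0 := rfl
@[simp] lemma one_re : (1 : Eis).re = 1 := rfl
@[simp] lemma one_im : (1 : Eis).im = 0 := rfl
@[simp] lemma add_re (a b : Eis) : (a + b).re = a.re + b.re := rfl
@[simp] lemma add_im (a b : Eis) : (a + b).im = a.im + b.im := rfl
@[simp] lemma neg_re (a : Eis) : (-a).re = -a.re := rfl
@[simp] lemma neg_im (a : Eis) : (-a).im = -a.im := rfl
@[simp] lemma mul_re (a b : Eis) : (a * b).re = a.re*b.re - a.im*b.im := rfl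
@[simp] lemma mul_im (a b : Eis) : (a * b).im = a.re*b.im + a.im*b.re - a.im*b.im := rfl

instance commRing : CommRing Eis where
  add_assoc := by intros; ext <;> simp <;> ring
  zero_add := by intros; ext <;> simp
  add_zero := by intros; ext <;> simp
  add_comm := by intros; ext <;> simp <;> ring
  neg_add_cancel := by intros; ext <;> simp
  mul_assoc := by intros; ext <;> simp <;> ring
  one_mul := by intros; ext <;> simp
  mul_one := by intros; ext <;> simp
  left_distrib := by intros; ext <;> simp <;> ring
  right_distrib := by intros; ext <;> simp <;> ring
  mul_comm := by intros; ext <;> simp <;> ring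
  zero_mul := by intros; ext <;> simp
  mul_zero := by intros; ext <;> simp
  nsmul := fun n a => ⟨n * a.re, n * a.im⟩
  nsmul_zero := by intros; ext <;> simp [HSMul.hSMul, SMul.smul]
  nsmul_succ := by intros; ext <;> simp [HSMul.hSMul, SMul.smul] <;> ring
  zsmul := fun n a => ⟨n * a.re, n * a.im⟩
  zsmul_zero' := by intros; ext <;> simp [HSMul.hSMul, SMul.smul]
  zsmul_succ' := by intros; ext <;> simp [HSMul.hSMul, SMul.smul] <;> ring
  zsmul_neg' := by intros; ext <;> simp [Int.negSucc_eq, HSMul.hSMul, SMul.smul] <;> ring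
  natCast := fun n => ⟨n, 0⟩
  natCast_zero := by ext <;> simp
  natCast_succ := by intros; ext <;> simp
  intCast := fun n => ⟨n, 0⟩
  intCast_ofNat := by intros; ext <;> rfl
  intCast_negSucc := fun n => by
    ext
    · show (Int.negSucc n : ℤ) = -((n+1 : ℕ) : ℤ); simp [Int.negSucc_eq]
    · show (0:ℤ) = -(0:ℤ); simp

@[simp] lemma intCast_re (n : ℤ) : (n : Eis).re = n := rfl
@[simp] lemma intCast_im (n : ℤ) : (n : Eis).im = 0 := rfl

@[simp] lemma sub_re (a b : Eis) : (a - b).re = a.re - b.re := rfl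
@[simp] lemma sub_im (a b : Eis) : (a - b).im = a.im - b.im := rfl

def conj (a : Eis) : Eis := ⟨a.re - a.im, -a.im⟩

@[simp] lemma conj_re (a : Eis) : (conj a).re = a.re - a.im := rfl
@[simp] lemma conj_im (a : Eis) : (conj a).im = -a.im := rfl

def norm (a : Eis) : ℤ := a.re^2 - a.re * a.im + a.im^2

lemma norm_mul (a b : Eis) : norm (a * b) = norm a * norm b := by
  simp [norm]; ring

lemma norm_nonneg (a : Eis) : 0 ≤ norm a := by
  have : 4 * norm a = (2*a.re - a.im)^2 + 3 * a.im^2 := by simp [norm]; ring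
  nlinarith [sq_nonneg (2*a.re - a.im), sq_nonneg a.im]

lemma norm_eq_zero_iff {a : Eis} : norm a = 0 ↔ a = 0 := by
  constructor
  · intro h
    have h4 : (2*a.re - a.im)^2 + 3 * a.im^2 = 0 := by simp [norm] at h; nlinarith
    have him : a.im = 0 := by nlinarith [sq_nonneg (2*a.re - a.im), sq_nonneg a.im]
    have hre : a.re = 0 := by rw [him] at h4; nlinarith [sq_nonneg a.re]
    ext <;> simp [hre, him]
  · rintro rfl; simp [norm]

lemma mul_conj (a : Eis) : a * conj a = (norm a : Eis) := by
  ext <;> simp only [mul_re, mul_im, conj_re, conj_im, intCast_re, intCast_im, norm] <;> ring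

lemma norm_intCast (n : ℤ) : norm (n : Eis) = n^2 := by simp [norm]

lemma norm_dvd {a b : Eis} (h : a ∣ b) : norm a ∣ norm b := by
  obtain ⟨c, rfl⟩ := h; exact ⟨norm c, norm_mul a c⟩

lemma isUnit_of_norm_one {a : Eis} (h : norm a = 1) : IsUnit a :=
  IsUnit.of_mul_eq_one (conj a) (by rw [mul_conj, h]; rfl)

lemma norm_one_of_isUnit {a : Eis} (h : IsUnit a) : norm a = 1 := by
  obtain ⟨u, rfl⟩ := h
  have h1 : (u : Eis) * (u⁻¹ : Eisˣ) = 1 := u.mul_inv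
  have := congrArg norm h1
  rw [norm_mul] at this
  have hn : norm (1 : Eis) = 1 := by simp [norm]
  rw [hn] at this
  have := Int.eq_one_of_mul_eq_one_right (norm_nonneg _) this
  exact this

/-- classification of units -/
lemma unit_cases {a : Eis} (h : norm a = 1) :
    a = ⟨1,0⟩ ∨ a = ⟨-1,0⟩ ∨ a = ⟨0,1⟩ ∨ a = ⟨0,-1⟩ ∨ a = ⟨1,1⟩ ∨ a = ⟨-1,-1⟩ := by
  simp only [norm] at h
  obtain ⟨x, y⟩ := a
  simp only at h
  have h4 : (2*x - y)^2 + 3 * y^2 = 4 := by nlinarith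
  have hy : y^2 ≤ 1 := by nlinarith [sq_nonneg (2*x-y)]
  have hx : x^2 ≤ 1 := by nlinarith [sq_nonneg (2*y-x)]
  obtain ⟨hy1, hy2⟩ : -1 ≤ y ∧ y ≤ 1 := abs_le.mp (by nlinarith [abs_nonneg y, sq_abs y] : |y| ≤ 1)
  obtain ⟨hx1, hx2⟩ : -1 ≤ x ∧ x ≤ 1 := abs_le.mp (by nlinarith [abs_nonneg x, sq_abs x] : |x| ≤ 1)
  interval_cases x <;> interval_cases y <;> simp_all <;> omega


instance : Nontrivial Eis := ⟨⟨0, 1, by decide⟩⟩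

lemma norm_pos {a : Eis} (h : a ≠ 0) : 0 < norm a :=
  lt_of_le_of_ne (norm_nonneg a) (fun h' => h (norm_eq_zero_iff.mp h'.symm))

lemma norm_conj (a : Eis) : norm (conj a) = norm a := by simp [norm]; ring

instance : Div Eis :=
  ⟨fun x y =>
    ⟨round (((x * conj y).re : ℚ) / ((norm y : ℚ))),
     round (((x * conj y).im : ℚ) / ((norm y : ℚ)))⟩⟩

lemma div_def (x y : Eis) : x / y =
    ⟨round (((x * conj y).re : ℚ) / ((norm y : ℚ))),
     round (((x * conj y).im : ℚ) / ((norm y : ℚ)))⟩ := rfl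

instance : Mod Eis := ⟨fun x y => x - y * (x / y)⟩

lemma mod_def (x y : Eis) : x % y = x - y * (x / y) := rfl

lemma norm_mod_lt (x : Eis) {y : Eis} (hy : y ≠ 0) : norm (x % y) < norm y := by
  have hN : (0:ℤ) < norm y := norm_pos hy
  have hNQ : (0:ℚ) < ((norm y : ℤ) : ℚ) := by exact_mod_cast hN
  have h1 : (x % y) * conj y = x * conj y - (norm y : Eis) * (x / y) := by
    rw [mod_def]
    have h2 := mul_conj y
    calc (x - y*(x/y)) * conj y = x * conj y - (y * conj y) * (x/y) := by ring
      _ = x * conj y - ((norm y : ℤ) : Eis) * (x/y) := by rw [h2]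
  set p1 : ℤ := (x * conj y).re with hp1
  set p2 : ℤ := (x * conj y).im with hp2
  set q1 : ℤ := round ((p1 : ℚ) / ((norm y : ℤ) : ℚ)) with hq1
  set q2 : ℤ := round ((p2 : ℚ) / ((norm y : ℤ) : ℚ)) with hq2
  have hq : x / y = ⟨q1, q2⟩ := rfl
  have hre : ((x % y) * conj y).re = p1 - norm y * q1 := by
    rw [h1, hq]; simp; rw [hp1, mul_re, conj_re, conj_im]; ring
  have him : ((x % y) * conj y).im = p2 - norm y * q2 := by
    rw [h1, hq]; simp; rw [hp2, mul_im, conj_re, conj_im]; ring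
  have hnormeq : norm (x % y) * norm y = norm ((x % y) * conj y) := by
    rw [← norm_conj y, norm_mul]
  set N : ℚ := ((norm y : ℤ) : ℚ) with hNdef
  set u : ℚ := (p1 : ℚ) - N * q1 with hu
  set v : ℚ := (p2 : ℚ) - N * q2 with hv
  have key : ∀ p : ℤ, |(p : ℚ) - N * round ((p : ℚ) / N)| ≤ N / 2 := by
    intro p
    have hr1 : |((p:ℚ) / N) - round ((p : ℚ) / N)| ≤ 1/2 := abs_sub_round _
    have h2 : (p : ℚ) - N * round ((p : ℚ) / N)
        = N * (((p:ℚ) / N) - round ((p : ℚ) / N)) := by field_simp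
    rw [h2, abs_mul, abs_of_pos hNQ]
    calc N * |((p:ℚ) / N) - round ((p : ℚ) / N)| ≤ N * (1/2) :=
          mul_le_mul_of_nonneg_left hr1 (le_of_lt hNQ)
      _ = N / 2 := by ring
  have hub : |u| ≤ N / 2 := key p1
  have hvb : |v| ≤ N / 2 := key p2
  have hcast : (norm ((x % y) * conj y) : ℚ) = u^2 - u*v + v^2 := by
    rw [norm, hre, him]; push_cast; ring
  have hprod : (norm (x % y) : ℚ) * N = u^2 - u*v + v^2 := by
    rw [← hcast, hNdef]; push_cast [← hnormeq]; ring
  have hb1 : u^2 ≤ (N/2)^2 := by rw [← sq_abs]; exact pow_le_pow_left₀ (abs_nonneg _) hub 2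
  have hb2 : v^2 ≤ (N/2)^2 := by rw [← sq_abs]; exact pow_le_pow_left₀ (abs_nonneg _) hvb 2
  have hb3 : -(u*v) ≤ (N/2)^2 := by
    have habs : |u*v| ≤ (N/2)^2 := by
      rw [abs_mul]
      calc |u| * |v| ≤ (N/2)*(N/2) := mul_le_mul hub hvb (abs_nonneg _) (by positivity)
        _ = (N/2)^2 := by ring
    nlinarith [neg_abs_le (u*v)]
  have hql : (norm (x % y) : ℚ) * N ≤ 3/4 * N^2 := by
    have h34 : (N/2)^2 = N^2/4 := by ring
    rw [hprod]
    rw [h34] at hb1 hb2 hb3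
    linarith
  have hfin : (norm (x % y) : ℚ) < N := by nlinarith
  rw [hNdef] at hfin
  exact_mod_cast hfin

lemma natAbs_norm_mod_lt (x : Eis) {y : Eis} (hy : y ≠ 0) :
    (norm (x % y)).natAbs < (norm y).natAbs := by
  have := norm_mod_lt x hy
  have h1 := norm_nonneg (x % y)
  have h2 := norm_nonneg y
  omega

instance : EuclideanDomain Eis :=
  { Eis.commRing, (inferInstance : Nontrivial Eis) with
    quotient := (· / ·)
    remainder := (· % ·)
    quotient_zero := fun a => by
      have : conj 0 = 0 := by ext <;> simp
      simp [div_def, this, norm]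
      rfl
    quotient_mul_add_remainder_eq := fun a b => by
      show b * (a / b) + (a % b) = a
      rw [mod_def]; ring
    r := fun a b => (norm a).natAbs < (norm b).natAbs
    r_wellFounded := (measure (Int.natAbs ∘ norm)).wf
    remainder_lt := fun a b hb => natAbs_norm_mod_lt a hb
    mul_left_not_lt := fun a b hb0 => by
      simp only [not_lt]
      rw [norm_mul, Int.natAbs_mul]
      have : 1 ≤ (norm b).natAbs := by
        have := norm_pos hb0; omega
      exact Nat.le_mul_of_pos_right _ (by omega)}

instance : IsDomain Eis := inferInstance

noncomputable instance : GCDMonoid Eis := EuclideanDomain.gcdMonoid Eis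

end Eis

namespace Eis

lemma cube_coords (m n : ℤ) :
    ((⟨m, n⟩ : Eis))^3 = ⟨m^3 - 3*m*n^2 + n^3, 3*m^2*n - 3*m*n^2⟩ := by
  have : ((⟨m, n⟩ : Eis))^3 = ⟨m,n⟩ * ⟨m,n⟩ * ⟨m,n⟩ := by ring
  rw [this]
  ext <;> simp <;> ring

lemma even_B (m n : ℤ) : Even (3*m^2*n - 3*m*n^2) := by
  have key : ∀ x y : ZMod 2, 3*x^2*y - 3*x*y^2 = 0 := by decide
  have h0 : ((3*m^2*n - 3*m*n^2 : ℤ) : ZMod 2) = 0 := by push_cast; exact key _ _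
  have h2 : (2:ℤ) ∣ (3*m^2*n - 3*m*n^2) := by
    exact_mod_cast (ZMod.intCast_zmod_eq_zero_iff_dvd _ 2).mp h0
  exact even_iff_two_dvd.mpr h2

lemma odd_A {m n : ℤ} (h : Odd (m^2 - m*n + n^2)) : Odd (m^3 - 3*m*n^2 + n^3) := by
  have key : ∀ x y : ZMod 2, (x^3 - 3*x*y^2 + y^3) - (x^2 - x*y + y^2) = 0 := by decide
  have h0 : (((m^3 - 3*m*n^2 + n^3) - (m^2 - m*n + n^2) : ℤ) : ZMod 2) = 0 := by
    push_cast; exact key _ _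
  have h2 : (2:ℤ) ∣ ((m^3 - 3*m*n^2 + n^3) - (m^2 - m*n + n^2)) :=
    (ZMod.intCast_zmod_eq_zero_iff_dvd _ 2).mp h0
  rw [Int.odd_iff] at h ⊢
  omega

lemma intCast_cube (t : ℤ) : ((t : Eis))^3 = ((t^3 : ℤ) : Eis) := by push_cast; ring

lemma norm_mk (x y : ℤ) : norm ⟨x, y⟩ = x^2 - x*y + y^2 := rfl

/-- Core lemma: if a² - ab + b² = t³ with the right parity and coprimality
conditions, then a + bω is (essentially) a perfect cube in ℤ[ω]. -/
lemma core {a b t : ℤ} (h : a^2 - a*b + b^2 = t^3) (ha : Odd a) (hb : Even b)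
    (ht3 : ¬ (3:ℤ) ∣ t)
    (hcop : ∀ p : ℤ, Prime p → p ∣ a → p ∣ b → False) :
    ∃ m n : ℤ, a = m^3 - 3*m*n^2 + n^3 ∧ b = 3*m^2*n - 3*m*n^2 := by
  classical
  set z : Eis := ⟨a, b⟩ with hzdef
  have hnz : norm z = t^3 := by rw [hzdef, norm_mk]; exact h
  have hz : z * conj z = ((t : Eis))^3 := by
    rw [mul_conj, hnz, intCast_cube]
  have hoddt : Odd t := by
    have hodd3 : Odd (t^3) := by
      rw [← h]
      rcases ha with ⟨i, hi⟩; rcases hb with ⟨j, hj⟩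
      rw [Int.odd_iff]; subst hi; subst hj; ring_nf; omega
    exact (Int.odd_pow.mp hodd3).resolve_right (by norm_num)
  -- gcd z (conj z) is a unit
  have hgcd : IsUnit (gcd z (conj z)) := by
    set g := gcd z (conj z) with hg
    have hg1 : g ∣ z := gcd_dvd_left _ _
    have hg2 : g ∣ conj z := gcd_dvd_right _ _
    have hn1 : norm g ∣ t^3 := hnz ▸ norm_dvd hg1
    have hdiff : g ∣ (⟨3*b^2, 0⟩ : Eis) := by
      have hd : g ∣ z - conj z := dvd_sub hg1 hg2
      have heq : (z - conj z) * ⟨-b, -2*b⟩ = (⟨3*b^2, 0⟩ : Eis) := by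
        ext <;> simp [hzdef] <;> ring
      exact heq ▸ Dvd.dvd.mul_right hd _
    have hsum : g ∣ (⟨2*a - b, 0⟩ : Eis) := by
      have heq : z + conj z = (⟨2*a - b, 0⟩ : Eis) := by ext <;> simp [hzdef] <;> ring
      exact heq ▸ dvd_add hg1 hg2
    have hn2 : norm g ∣ (3*b^2)^2 := by
      have hne : norm (⟨3*b^2, 0⟩ : Eis) = (3*b^2)^2 := by rw [norm_mk]; ring
      exact hne ▸ norm_dvd hdiff
    have hn3 : norm g ∣ (2*a - b)^2 := by
      have hne : norm (⟨2*a - b, 0⟩ : Eis) = (2*a - b)^2 := by rw [norm_mk]; ring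
      exact hne ▸ norm_dvd hsum
    have hk : norm g = 1 := by
      by_contra hne
      have hk0 : norm g ≠ 0 := by
        intro h0
        have hgz : g = 0 := norm_eq_zero_iff.mp h0
        rw [hgz] at hg1
        have hz0 : z = 0 := zero_dvd_iff.mp hg1
        have ha0 : a = 0 := by rw [hzdef] at hz0; exact congrArg Eis.re hz0
        rw [ha0, Int.odd_iff] at ha; omega
      have hnatne : (norm g).natAbs ≠ 1 := by
        have hpos := norm_nonneg g
        omega
      obtain ⟨p, hp, hpdvd⟩ := Int.exists_prime_and_dvd hnatne
      have hpt : p ∣ t := hp.dvd_of_dvd_pow (dvd_trans hpdvd hn1)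
      have hpnat : p.natAbs.Prime := Int.prime_iff_natAbs_prime.mp hp
      have hp2 : ¬ p ∣ 2 := by
        intro h2
        have hd2 : p.natAbs ∣ 2 := by
          have := Int.natAbs_dvd_natAbs.mpr h2; simpa using this
        have : p.natAbs = 2 := by
          have := Nat.le_of_dvd (by norm_num) hd2
          have := hpnat.two_le
          omega
        have h2t : ((p.natAbs : ℤ)) ∣ t := Int.natAbs_dvd.mpr hpt
        rw [this] at h2t
        norm_num at h2t
        rw [Int.odd_iff] at hoddt; omega
      have hp3 : ¬ p ∣ 3 := by
        intro h3
        have hd3 : p.natAbs ∣ 3 := by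
          have := Int.natAbs_dvd_natAbs.mpr h3; simpa using this
        have : p.natAbs = 3 := by
          have h5 := Nat.le_of_dvd (by norm_num) hd3
          have := hpnat.two_le
          interval_cases hh : p.natAbs <;> omega
        have h3t : ((p.natAbs : ℤ)) ∣ t := Int.natAbs_dvd.mpr hpt
        rw [this] at h3t
        norm_num at h3t
        exact ht3 h3t
      have hpb : p ∣ b := by
        have h1 : p ∣ 3*b^2 := hp.dvd_of_dvd_pow (dvd_trans hpdvd hn2)
        rcases (hp.dvd_mul).mp h1 with h' | h'
        · exact absurd h' hp3
        · exact hp.dvd_of_dvd_pow h'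
      have hpa : p ∣ a := by
        have h2ab : p ∣ 2*a - b := hp.dvd_of_dvd_pow (dvd_trans hpdvd hn3)
        have h2a : p ∣ 2*a := by
          have := dvd_add h2ab hpb; simpa using this
        rcases (hp.dvd_mul).mp h2a with h' | h'
        · exact absurd h' hp2
        · exact h'
      exact hcop p hp hpa hpb
    exact isUnit_of_norm_one hk
  obtain ⟨d, hd⟩ := exists_associated_pow_of_mul_eq_pow hgcd hz
  obtain ⟨u, hu⟩ := hd
  -- hu : d^3 * u = z
  have hnu : norm (u : Eis) = 1 := norm_one_of_isUnit u.isUnit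
  have hnd : Odd (norm d) := by
    have h1 : norm z = (norm d)^3 * norm (u : Eis) := by
      rw [← hu, norm_mul]
      congr 1
      have h3 : d^3 = d*d*d := by ring
      rw [h3, norm_mul, norm_mul]; ring
    rw [hnu, mul_one, hnz] at h1
    have hodd3 : Odd ((norm d)^3) := h1 ▸ (hoddt.pow)
    exact (Int.odd_pow.mp hodd3).resolve_right (by norm_num)
  set m := d.re with hm
  set n := d.im with hn
  have hd3 : d^3 = ⟨m^3 - 3*m*n^2 + n^3, 3*m^2*n - 3*m*n^2⟩ := by
    have hdd : d = ⟨m, n⟩ := by ext <;> rfl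
    rw [hdd, cube_coords]
  set A := m^3 - 3*m*n^2 + n^3 with hA
  set B := 3*m^2*n - 3*m*n^2 with hB
  have hAodd : Odd A := by
    apply odd_A
    rwa [show m^2 - m*n + n^2 = norm d from rfl]
  have hBeven : Even B := even_B m n
  have hucase := unit_cases hnu
  have hz_eq : z = d^3 * u := hu.symm
  rw [hd3] at hz_eq
  rw [Int.odd_iff] at ha hAodd
  rw [Int.even_iff] at hb hBeven
  rcases hucase with h6 | h6 | h6 | h6 | h6 | h6 <;> rw [h6] at hz_eq <;>
    [skip; skip; exfalso; exfalso; exfalso; exfalso]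
  · -- u = 1
    refine ⟨m, n, ?_, ?_⟩
    · have h7 := congrArg Eis.re hz_eq; simp [hzdef] at h7
      rw [hA] at h7; linear_combination h7
    · have h7 := congrArg Eis.im hz_eq; simp [hzdef] at h7
      rw [hB] at h7; linear_combination h7
  · -- u = -1 : use (-m, -n)
    refine ⟨-m, -n, ?_, ?_⟩
    · have h7 := congrArg Eis.re hz_eq; simp [hzdef] at h7
      rw [hA] at h7; linear_combination h7
    · have h7 := congrArg Eis.im hz_eq; simp [hzdef] at h7
      rw [hB] at h7; linear_combination h7
  · -- u = ω : a = -B even, contradiction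
    have h7 := congrArg Eis.re hz_eq; simp [hzdef] at h7
    omega
  · have h7 := congrArg Eis.re hz_eq; simp [hzdef] at h7
    omega
  · have h7 := congrArg Eis.im hz_eq; simp [hzdef] at h7
    omega
  · have h7 := congrArg Eis.im hz_eq; simp [hzdef] at h7
    omega

end Eis

section Descent

open Eis in
/-- restatement of the core lemma at top level -/
lemma eis_core {a b t : ℤ} (h : a^2 - a*b + b^2 = t^3) (ha : Odd a) (hb : Even b)
    (ht3 : ¬ (3:ℤ) ∣ t)
    (hcop : ∀ p : ℤ, Prime p → p ∣ a → p ∣ b → False) :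
    ∃ m n : ℤ, a = m^3 - 3*m*n^2 + n^3 ∧ b = 3*m^2*n - 3*m*n^2 :=
  Eis.core h ha hb ht3 hcop

lemma dvd_cube_sub_self (x : ℤ) : (3:ℤ) ∣ x^3 - x := by
  have key : ∀ r : ZMod 3, r^3 - r = 0 := by decide
  have h0 : ((x^3 - x : ℤ) : ZMod 3) = 0 := by push_cast; exact key _
  exact_mod_cast (ZMod.intCast_zmod_eq_zero_iff_dvd _ 3).mp h0

lemma isCoprime_of_no_prime {a b : ℤ}
    (H : ∀ p : ℤ, Prime p → p ∣ a → p ∣ b → False) : IsCoprime a b := by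
  rw [Int.isCoprime_iff_gcd_eq_one]
  by_contra hne
  obtain ⟨p, hp, hpd⟩ := Int.exists_prime_and_dvd (n := (Int.gcd a b : ℤ)) (by simpa using hne)
  exact H p hp (hpd.trans (Int.gcd_dvd_left a b)) (hpd.trans (Int.gcd_dvd_right a b))

lemma not_both_even {a b : ℤ} (h : IsCoprime a b) (ha : Even a) (hb : Even b) : False := by
  have h2 := h.isUnit_of_dvd' (even_iff_two_dvd.mp ha) (even_iff_two_dvd.mp hb)
  rw [Int.isUnit_iff] at h2
  omega

lemma split3 {a b c w : ℤ} (hab : IsCoprime a b) (hac : IsCoprime a c) (hbc : IsCoprime b c)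
    (h : a * (b * c) = 2*w^3) (ha : Even a) :
    ∃ e f g : ℤ, a = 2*e^3 ∧ b = f^3 ∧ c = g^3 := by
  obtain ⟨a1, ha1⟩ := ha
  have h2 : 2*(a1*(b*c)) = 2*(w^3) := by linear_combination h - (b*c)*ha1
  have h' : a1 * (b*c) = w^3 := mul_left_cancel₀ two_ne_zero h2
  have hco1 : IsCoprime a1 (b*c) :=
    (hab.mul_right hac).of_isCoprime_of_dvd_left ⟨2, by omega⟩
  obtain ⟨e, he⟩ := Int.eq_pow_of_mul_eq_pow_odd_left hco1 (by decide) h'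
  obtain ⟨d, hd⟩ := Int.eq_pow_of_mul_eq_pow_odd_right hco1 (by decide) h'
  obtain ⟨f, hf⟩ := Int.eq_pow_of_mul_eq_pow_odd_left hbc (by decide) hd
  obtain ⟨g, hg⟩ := Int.eq_pow_of_mul_eq_pow_odd_right hbc (by decide) hd
  exact ⟨e, f, g, by rw [ha1, he]; ring, hf, hg⟩

lemma coprime_of_cube {a b : ℤ} (h : IsCoprime (a^3) (b^3)) : IsCoprime a b :=
  (h.of_isCoprime_of_dvd_left (dvd_pow_self a (by norm_num))).of_isCoprime_of_dvd_right
    (dvd_pow_self b (by norm_num))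

lemma natAbs_le_of_dvd {a b : ℤ} (h : a ∣ b) (hb : b ≠ 0) : a.natAbs ≤ b.natAbs :=
  Nat.le_of_dvd (Int.natAbs_pos.mpr hb) (Int.natAbs_dvd_natAbs.mpr h)


lemma natAbs_cube_le {e w P : ℤ} (hdvd : (2*e^3) ∣ P) (hP : P = 2*w^3) (hP0 : P ≠ 0) :
    e.natAbs ≤ w.natAbs := by
  have h1 := natAbs_le_of_dvd hdvd hP0
  rw [hP] at h1
  have h2 : 2*e.natAbs^3 ≤ 2*w.natAbs^3 := by
    calc 2*e.natAbs^3 = (2*e^3).natAbs := by rw [Int.natAbs_mul, Int.natAbs_pow]; rfl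
      _ ≤ (2*w^3).natAbs := h1
      _ = 2*w.natAbs^3 := by rw [Int.natAbs_mul, Int.natAbs_pow]; rfl
  exact (Nat.pow_le_pow_iff_left (by norm_num : 3 ≠ 0)).mp (by omega)

/-- Main descent: three cubes in arithmetic progression. -/
theorem cubes_ap : ∀ N : ℕ, ∀ x y z : ℤ, z.natAbs = N →
    x^3 + y^3 = 2*z^3 → IsCoprime x y → z ≠ 0 → x = y := by
  intro N
  induction N using Nat.strong_induction_on with
  | _ N IH =>
  intro x y z hzN h hco hz0
  have hprime2 : Prime (2:ℤ) := Int.prime_two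
  have hprime3 : Prime (3:ℤ) := Int.prime_three
  have hxy_odd : Odd x ∧ Odd y := by
    rcases Int.even_or_odd x with hx | hx <;> rcases Int.even_or_odd y with hy | hy
    · exact (not_both_even hco hx hy).elim
    · exfalso
      have h1 : Even (x^3) := Int.even_pow.mpr ⟨hx, by norm_num⟩
      have h2 : Odd (y^3) := hy.pow
      have h3 : Odd (x^3 + y^3) := h1.add_odd h2
      rw [h] at h3
      exact (Int.not_odd_iff_even.mpr ⟨z^3, by ring⟩) h3
    · exfalso
      have h1 : Odd (x^3) := hx.pow
      have h2 : Even (y^3) := Int.even_pow.mpr ⟨hy, by norm_num⟩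
      have h3 : Odd (x^3 + y^3) := by rw [add_comm]; exact h2.add_odd h1
      rw [h] at h3
      exact (Int.not_odd_iff_even.mpr ⟨z^3, by ring⟩) h3
    · exact ⟨hx, hy⟩
  obtain ⟨hxo, hyo⟩ := hxy_odd
  have hx0 : x ≠ 0 := by rintro rfl; rw [Int.odd_iff] at hxo; omega
  have hs_ne : x + y ≠ 0 := by
    intro hs
    have hyx : y = -x := by omega
    rw [hyx] at h
    have hz3 : (0:ℤ) = 2*z^3 := by linear_combination h
    have hz30 : z^3 = 0 := by omega
    exact hz0 ((pow_eq_zero_iff (by norm_num : 3 ≠ 0)).mp hz30)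
  have hNpos : 0 < x^2 - x*y + y^2 := by
    rcases eq_or_ne y 0 with rfl | hy0
    · have hpos : 0 < x^2 := by positivity
      nlinarith
    · have h1 : 0 < y^2 := by positivity
      nlinarith [sq_nonneg (2*x - y)]
  have hNodd : Odd (x^2 - x*y + y^2) := by
    have h1 : Odd (x*x) := hxo.mul hxo
    have h2 : Odd (x*y) := hxo.mul hyo
    have h3 : Odd (y*y) := hyo.mul hyo
    have e1 : Even (x*x - x*y) := h1.sub_odd h2
    have e2 : Odd ((x*x - x*y) + y*y) := e1.add_odd h3
    have hrw : x*x - x*y + y*y = x^2 - x*y + y^2 := by ring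
    rwa [hrw] at e2
  have hsN : (x+y) * (x^2 - x*y + y^2) = 2*z^3 := by linear_combination h
  by_cases h3z : (3:ℤ) ∣ z
  · -- CASE B : 3 ∣ z
    have h3s : (3:ℤ) ∣ x + y := by
      have hz3 : (3:ℤ) ∣ 2*z^3 := Dvd.dvd.mul_left (dvd_pow h3z (by norm_num)) 2
      have hrw : x + y = (x^3 + y^3) - (x^3 - x) - (y^3 - y) := by ring
      rw [hrw, h]
      exact dvd_sub (dvd_sub hz3 (dvd_cube_sub_self x)) (dvd_cube_sub_self y)
    have h3x : ¬ (3:ℤ) ∣ x := by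
      intro hdx
      have hdy : (3:ℤ) ∣ y := by have := dvd_sub h3s hdx; simpa using this
      have hu := hco.isUnit_of_dvd' hdx hdy
      rw [Int.isUnit_iff] at hu; omega
    have h3y : ¬ (3:ℤ) ∣ y := by
      intro hdy
      exact h3x (by have := dvd_sub h3s hdy; simpa using this)
    obtain ⟨sp, hsp⟩ := h3s
    have hNk : x^2 - x*y + y^2 = 3*(3*sp^2 - x*y) := by
      linear_combination (x + y + 3*sp) * hsp
    set k := 3*sp^2 - x*y with hk
    have h3k : ¬ (3:ℤ) ∣ k := by
      intro hdk
      have hdxy : (3:ℤ) ∣ x*y := by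
        have hrw : x*y = 3*sp^2 - k := by rw [hk]; ring
        rw [hrw]; exact dvd_sub ⟨sp^2, by ring⟩ hdk
      rcases hprime3.dvd_mul.mp hdxy with h' | h'
      exacts [h3x h', h3y h']
    have hkodd : Odd k := by
      rw [hNk] at hNodd; rw [Int.odd_iff] at hNodd ⊢; omega
    have hkpos : 0 < k := by rw [hNk] at hNpos; linarith
    obtain ⟨z1, hz1⟩ := h3z
    have hspk : sp * k = 6 * z1^3 := by
      have h9 : 9 * (sp * k) = 9 * (6 * z1^3) := by
        rw [hsp, hNk, hz1] at hsN; linear_combination hsN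
      exact mul_left_cancel₀ (by norm_num) h9
    have h3sp : (3:ℤ) ∣ sp := by
      have hd : (3:ℤ) ∣ sp * k := by rw [hspk]; exact ⟨2*z1^3, by ring⟩
      rcases hprime3.dvd_mul.mp hd with h' | h'
      exacts [h', absurd h' h3k]
    obtain ⟨sq, hsq⟩ := h3sp
    have hseven : Even (x + y) := hxo.add_odd hyo
    have hsqe : Even sq := by
      obtain ⟨j, hj⟩ := hseven
      have : x + y = 3*(3*sq) := by rw [hsp, hsq]
      rcases Int.even_or_odd sq with h' | h'
      · exact h'
      · exfalso; rw [Int.odd_iff] at h'; omega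
    obtain ⟨h1, hh1⟩ := hsqe
    have hs18 : x + y = 18*h1 := by rw [hsp, hsq, hh1]; ring
    have hhk : h1 * k = z1^3 := by
      have h6 : 6 * (h1 * k) = 6 * (z1^3) := by
        rw [hsq, hh1] at hspk; linear_combination hspk
      exact mul_left_cancel₀ (by norm_num) h6
    have hcophk : IsCoprime h1 k := by
      apply isCoprime_of_no_prime
      intro p hp hpa hpb
      have hps : p ∣ x + y := by rw [hs18]; exact Dvd.dvd.mul_left hpa 18
      have hp3xy : p ∣ 3*(x*y) := by
        have hrw : 3*(x*y) = (x+y)^2 - (x^2 - x*y + y^2) := by ring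
        rw [hrw, hNk]
        exact dvd_sub (dvd_pow hps (by norm_num)) (Dvd.dvd.mul_left hpb 3)
      have hpxy : p ∣ x*y := by
        rcases hp.dvd_mul.mp hp3xy with h' | h'
        · exfalso
          have hp3 : p.natAbs = 3 :=
            (Nat.prime_dvd_prime_iff_eq (Int.prime_iff_natAbs_prime.mp hp)
              (by norm_num)).mp (by exact_mod_cast Int.natAbs_dvd_natAbs.mpr h')
          have hk3 : ((p.natAbs : ℤ)) ∣ k := Int.natAbs_dvd.mpr hpb
          rw [hp3] at hk3
          exact h3k (by exact_mod_cast hk3)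
        · exact h'
      rcases hp.dvd_mul.mp hpxy with h' | h'
      · have hpy : p ∣ y := by have := dvd_sub hps h'; simpa using this
        exact hp.not_unit (hco.isUnit_of_dvd' h' hpy)
      · have hpx : p ∣ x := by have := dvd_sub hps h'; simpa using this
        exact hp.not_unit (hco.isUnit_of_dvd' hpx h')
    obtain ⟨w, hw⟩ := Int.eq_pow_of_mul_eq_pow_odd_left hcophk (by decide) hhk
    obtain ⟨t, ht⟩ := Int.eq_pow_of_mul_eq_pow_odd_right hcophk (by decide) hhk
    have ht0 : t ≠ 0 := by rintro rfl; rw [ht] at hkpos; norm_num at hkpos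
    have h3t : ¬ (3:ℤ) ∣ t := fun hd => h3k (by rw [ht]; exact dvd_pow hd (by norm_num))
    have hPQt : (x - 6*h1)^2 - (x - 6*h1)*(6*h1) + (6*h1)^2 = t^3 := by
      have h3' : 3*((x - 6*h1)^2 - (x - 6*h1)*(6*h1) + (6*h1)^2) = 3*(t^3) := by
        rw [← ht]
        linear_combination hNk + (3*(6*h1) - 2*x + y) * hs18 - (3*(6*h1) - 2*x + y) * hs18 + (2*x - y - 18*h1) * hs18
      exact mul_left_cancel₀ (by norm_num) h3'
    have hPodd : Odd (x - 6*h1) := by rw [Int.odd_iff] at hxo ⊢; omega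
    have hQeven : Even (6*(h1:ℤ)) := ⟨3*h1, by ring⟩
    have hyQP : y = 2*(6*h1) - (x - 6*h1) := by linear_combination hs18
    have hcopPQ : ∀ p : ℤ, Prime p → p ∣ (x - 6*h1) → p ∣ (6*h1) → False := by
      intro p hp hpP hpQ
      have hpx : p ∣ x := by have := dvd_add hpP hpQ; simpa using this
      have hpy : p ∣ y := by rw [hyQP]; exact dvd_sub (Dvd.dvd.mul_left hpQ 2) hpP
      exact hp.not_unit (hco.isUnit_of_dvd' hpx hpy)
    obtain ⟨m, n, hPA, hQB⟩ := eis_core hPQt hPodd hQeven h3t hcopPQ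
    have hxv : x = (m^3 - 3*m*n^2 + n^3) + (3*m^2*n - 3*m*n^2) := by
      linear_combination hPA + hQB
    have hyv : y = 2*(3*m^2*n - 3*m*n^2) - (m^3 - 3*m*n^2 + n^3) := by
      linear_combination hyQP + 2*hQB - hPA
    have hmn : m*(n*(m-n)) = 2*w^3 := by
      have h3' : 3*(m*(n*(m-n))) = 3*(2*w^3) := by
        linear_combination (-1)*hQB + 6*hw
      exact mul_left_cancel₀ (by norm_num) h3'
    have hcop_mn : ∀ p : ℤ, Prime p → p ∣ m → p ∣ n → False := by
      intro p hp hpm hpn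
      have hpP : p ∣ (x - 6*h1) := by
        rw [hPA]
        have hrw : m^3 - 3*m*n^2 + n^3 = m*(m^2 - 3*n^2) + n*n^2 := by ring
        rw [hrw]; exact dvd_add (Dvd.dvd.mul_right hpm _) (Dvd.dvd.mul_right hpn _)
      have hpQ : p ∣ (6*(h1:ℤ)) := by
        rw [hQB]
        have hrw : 3*m^2*n - 3*m*n^2 = m*(3*m*n - 3*n^2) := by ring
        rw [hrw]; exact Dvd.dvd.mul_right hpm _
      exact hcopPQ p hp hpP hpQ
    have hco_mn : IsCoprime m n := isCoprime_of_no_prime hcop_mn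
    have hco_m_mn : IsCoprime m (m - n) := isCoprime_of_no_prime (by
      intro p hp h1' h2'
      exact hcop_mn p hp h1' (by have := dvd_sub h1' h2'; simpa using this))
    have hco_n_mn : IsCoprime n (m - n) := isCoprime_of_no_prime (by
      intro p hp h1' h2'
      exact hcop_mn p hp (by have := dvd_add h2' h1'; simpa using this) h1')
    have hw0 : w ≠ 0 := by
      rintro rfl
      have hh0 : h1 = 0 := by rw [hw]; ring
      rw [hh0] at hs18; norm_num at hs18; exact hs_ne hs18
    have hprod0 : m*(n*(m-n)) ≠ 0 := by
      rw [hmn]; exact mul_ne_zero two_ne_zero (pow_ne_zero _ hw0)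
    have hm0 : m ≠ 0 := fun h' => hprod0 (by rw [h']; ring)
    have hn0 : n ≠ 0 := fun h' => hprod0 (by rw [h']; ring)
    have hmn0 : m - n ≠ 0 := fun h' => hprod0 (by
      have : m*(n*(m-n)) = m*n*(m-n) := by ring
      rw [this, h']; ring)
    have hz10 : z1 ≠ 0 := by rintro rfl; exact hz0 (by rw [hz1]; ring)
    have hz11 : 1 ≤ z1.natAbs := Int.natAbs_pos.mpr hz10
    have hwle : w.natAbs ≤ z1.natAbs := by
      have hzeq : z1^3 = w^3 * t^3 := by rw [← hw, ← ht]; linear_combination (-1)*hhk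
      have hcube : z1.natAbs^3 = w.natAbs^3 * t.natAbs^3 := by
        calc z1.natAbs^3 = (z1^3).natAbs := (Int.natAbs_pow z1 3).symm
          _ = (w^3*t^3).natAbs := by rw [hzeq]
          _ = w.natAbs^3 * t.natAbs^3 := by
              rw [Int.natAbs_mul, Int.natAbs_pow, Int.natAbs_pow]
      have ht1 : 1 ≤ t.natAbs^3 := Nat.one_le_pow _ _ (Int.natAbs_pos.mpr ht0)
      have hle : w.natAbs^3 ≤ z1.natAbs^3 := by
        calc w.natAbs^3 = w.natAbs^3 * 1 := by ring
          _ ≤ w.natAbs^3 * t.natAbs^3 := Nat.mul_le_mul_left _ ht1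
          _ = z1.natAbs^3 := hcube.symm
      exact (Nat.pow_le_pow_iff_left (by norm_num : 3 ≠ 0)).mp hle
    have hzN3 : z.natAbs = 3 * z1.natAbs := by rw [hz1, Int.natAbs_mul]; rfl
    rcases Int.even_or_odd m with hme | hmo
    · -- m even
      obtain ⟨e, f, g, hme2, hnf, hmng⟩ := split3 hco_mn hco_m_mn hco_n_mn hmn hme
      have he0 : e ≠ 0 := fun h' => hm0 (by rw [hme2, h']; ring)
      have hsize : e.natAbs < N := by
        have hewle : e.natAbs ≤ w.natAbs :=
          natAbs_cube_le (by rw [← hme2]; exact dvd_mul_right m _) hmn hprod0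
        omega
      have hnew : f^3 + g^3 = 2*e^3 := by rw [← hnf, ← hmng, ← hme2]; ring
      have hcofg : IsCoprime f g := coprime_of_cube (by rw [← hnf, ← hmng]; exact hco_n_mn)
      have hfg := IH e.natAbs hsize f g e rfl hnew hcofg he0
      have hm2n : m = 2*n := by
        have hnn : n = m - n := by
          linear_combination hnf - hmng + (f^2 + f*g + g^2)*hfg
        omega
      rw [hxv, hyv, hm2n]; ring
    · rcases Int.even_or_odd n with hne | hno
      · -- n even
        have hmn' : n*(m*(m-n)) = 2*w^3 := by linear_combination hmn
        obtain ⟨e, f, g, hne2, hmf, hmng⟩ := split3 hco_mn.symm hco_n_mn hco_m_mn hmn' hne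
        have he0 : e ≠ 0 := fun h' => hn0 (by rw [hne2, h']; ring)
        have hsize : e.natAbs < N := by
          have hewle : e.natAbs ≤ w.natAbs :=
            natAbs_cube_le (by rw [← hne2]; exact ⟨m*(m-n), by ring⟩) hmn hprod0
          omega
        have hnew : f^3 + (-g)^3 = 2*e^3 := by
          rw [← hne2]; linear_combination hmng - hmf
        have hcofg : IsCoprime f (-g) :=
          (coprime_of_cube (by rw [← hmf, ← hmng]; exact hco_m_mn)).neg_right
        have hfg := IH e.natAbs hsize f (-g) e rfl hnew hcofg he0
        have hn2m : n = 2*m := by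
          have hmm : m = -(m - n) := by
            linear_combination hmf + hmng + (f^2 - f*g + g^2)*hfg
          omega
        rw [hxv, hyv, hn2m]; ring
      · -- m, n odd : m - n even
        have hmne : Even (m - n) := hmo.sub_odd hno
        have hmn' : (m-n)*(m*n) = 2*w^3 := by linear_combination hmn
        obtain ⟨e, f, g, hmne2, hmf, hng⟩ :=
          split3 hco_m_mn.symm hco_n_mn.symm hco_mn hmn' hmne
        have he0 : e ≠ 0 := fun h' => hmn0 (by rw [hmne2, h']; ring)
        have hsize : e.natAbs < N := by
          have hewle : e.natAbs ≤ w.natAbs :=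
            natAbs_cube_le (by rw [← hmne2]; exact ⟨m*n, by ring⟩) hmn hprod0
          omega
        have hnew : f^3 + (-g)^3 = 2*e^3 := by
          rw [← hmne2]; linear_combination hng - hmf
        have hcofg : IsCoprime f (-g) :=
          (coprime_of_cube (by rw [← hmf, ← hng]; exact hco_mn)).neg_right
        have hfg := IH e.natAbs hsize f (-g) e rfl hnew hcofg he0
        have hmeq : m = -n := by
          linear_combination hmf + hng + (f^2 - f*g + g^2)*hfg
        rw [hxv, hyv, hmeq]; ring
  · -- CASE A : 3 ∤ z
    have h3N : ¬ (3:ℤ) ∣ (x^2 - x*y + y^2) := by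
      intro hd
      have hdz : (3:ℤ) ∣ 2*z^3 := by rw [← hsN]; exact Dvd.dvd.mul_left hd _
      rcases hprime3.dvd_mul.mp hdz with h' | h'
      · norm_num at h'
      · exact h3z (hprime3.dvd_of_dvd_pow h')
    have h3sA : ¬ (3:ℤ) ∣ (x + y) := by
      intro hd
      have hdz : (3:ℤ) ∣ 2*z^3 := by rw [← hsN]; exact Dvd.dvd.mul_right hd _
      rcases hprime3.dvd_mul.mp hdz with h' | h'
      · norm_num at h'
      · exact h3z (hprime3.dvd_of_dvd_pow h')
    have hco4 : IsCoprime (4*(x+y)) (x^2 - x*y + y^2) := by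
      apply isCoprime_of_no_prime
      intro p hp hp4 hpN
      have hpodd : ¬ p ∣ 2 := by
        intro h2
        have hp2 : p.natAbs = 2 :=
          (Nat.prime_dvd_prime_iff_eq (Int.prime_iff_natAbs_prime.mp hp) (by norm_num)).mp
            (by exact_mod_cast Int.natAbs_dvd_natAbs.mpr h2)
        have hx' : ((p.natAbs : ℤ)) ∣ (x^2 - x*y + y^2) := Int.natAbs_dvd.mpr hpN
        rw [hp2] at hx'
        have h2N : (2:ℤ) ∣ (x^2 - x*y + y^2) := by exact_mod_cast hx'
        exact (Int.not_odd_iff_even.mpr (even_iff_two_dvd.mpr h2N)) hNodd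
      have hps : p ∣ x + y := by
        rcases hp.dvd_mul.mp hp4 with h' | h'
        · exfalso
          have h4 : (4:ℤ) = 2*2 := by norm_num
          rw [h4] at h'
          rcases hp.dvd_mul.mp h' with h'' | h'' <;> exact hpodd h''
        · exact h'
      have hp3xy : p ∣ 3*(x*y) := by
        have hrw : 3*(x*y) = (x+y)^2 - (x^2 - x*y + y^2) := by ring
        rw [hrw]; exact dvd_sub (dvd_pow hps (by norm_num)) hpN
      rcases hp.dvd_mul.mp hp3xy with h' | h'
      · have hp3 : p.natAbs = 3 :=
          (Nat.prime_dvd_prime_iff_eq (Int.prime_iff_natAbs_prime.mp hp) (by norm_num)).mp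
            (by exact_mod_cast Int.natAbs_dvd_natAbs.mpr h')
        have hx' : ((p.natAbs : ℤ)) ∣ (x^2 - x*y + y^2) := Int.natAbs_dvd.mpr hpN
        rw [hp3] at hx'
        exact h3N (by exact_mod_cast hx')
      · rcases hp.dvd_mul.mp h' with h'' | h''
        · have hpy : p ∣ y := by have := dvd_sub hps h''; simpa using this
          exact hp.not_unit (hco.isUnit_of_dvd' h'' hpy)
        · have hpx : p ∣ x := by have := dvd_sub hps h''; simpa using this
          exact hp.not_unit (hco.isUnit_of_dvd' hpx h'')
    have h4s : 4*(x+y) * (x^2-x*y+y^2) = (2*z)^3 := by linear_combination 4*h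
    obtain ⟨c, hc⟩ := Int.eq_pow_of_mul_eq_pow_odd_left hco4 (by decide) h4s
    obtain ⟨t, ht⟩ := Int.eq_pow_of_mul_eq_pow_odd_right hco4 (by decide) h4s
    have hceven : Even c := by
      have hc3 : Even (c^3) := by rw [← hc]; exact ⟨2*(x+y), by ring⟩
      exact (Int.even_pow.mp hc3).1
    obtain ⟨w, hwc⟩ := hceven
    have hsw : x + y = 2*w^3 := by
      have h4' : 4*(x+y) = 4*(2*w^3) := by rw [hc, hwc]; ring
      exact mul_left_cancel₀ (by norm_num) h4'
    have htpos : 0 < t := by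
      have h0 : 0 < t^3 := by rw [← ht]; exact hNpos
      nlinarith [sq_nonneg t]
    have htodd : Odd t := by
      have hodd3 : Odd (t^3) := by rw [← ht]; exact hNodd
      exact (Int.odd_pow.mp hodd3).resolve_right (by norm_num)
    have h3t : ¬ (3:ℤ) ∣ t := fun hd => h3N (by rw [ht]; exact dvd_pow hd (by norm_num))
    by_cases ht1 : t = 1
    · -- x² - xy + y² = 1 forces x = y
      rw [ht1] at ht
      have h4a : (2*x-y)^2 + 3*y^2 = 4 := by linear_combination 4*ht
      have h4b : (2*y-x)^2 + 3*x^2 = 4 := by linear_combination 4*ht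
      have hy2 : y^2 ≤ 1 := by nlinarith [sq_nonneg (2*x-y)]
      have hx2 : x^2 ≤ 1 := by nlinarith [sq_nonneg (2*y-x)]
      obtain ⟨hyb1, hyb2⟩ : -1 ≤ y ∧ y ≤ 1 :=
        abs_le.mp (by nlinarith [sq_abs y, abs_nonneg y] : |y| ≤ 1)
      obtain ⟨hxb1, hxb2⟩ : -1 ≤ x ∧ x ≤ 1 :=
        abs_le.mp (by nlinarith [sq_abs x, abs_nonneg x] : |x| ≤ 1)
      rw [Int.odd_iff] at hxo hyo
      have hxe : x = 1 ∨ x = -1 := by omega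
      have hye : y = 1 ∨ y = -1 := by omega
      rcases hxe with rfl | rfl <;> rcases hye with rfl | rfl <;>
        first
          | rfl
          | (exfalso; norm_num at ht)
    have ht2 : 2 ≤ t.natAbs := by omega
    have hteq : (-y)^2 - (-y)*(x-y) + (x-y)^2 = t^3 := by linear_combination ht
    have hbe : Even (x - y) := hxo.sub_odd hyo
    have hcop2 : ∀ p : ℤ, Prime p → p ∣ -y → p ∣ x - y → False := by
      intro p hp hpy hpxy
      have hpy' : p ∣ y := (dvd_neg).mp hpy
      have hpx : p ∣ x := by have := dvd_add hpxy hpy'; simpa using this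
      exact hp.not_unit (hco.isUnit_of_dvd' hpx hpy')
    obtain ⟨m, n, hyA, hxB⟩ := eis_core hteq hyo.neg hbe h3t hcop2
    have hxv : x = (3*m^2*n - 3*m*n^2) - (m^3 - 3*m*n^2 + n^3) := by
      linear_combination hxB - hyA
    have hyv : y = -(m^3 - 3*m*n^2 + n^3) := by linear_combination (-1)*hyA
    have hF : (m+n)*((2*m-n)*(m-2*n)) = 2*(-w)^3 := by
      linear_combination (-2)*hyA + hxB - hsw
    have hw0 : w ≠ 0 := by
      rintro rfl
      rw [show (2:ℤ)*(0:ℤ)^3 = 0 from by ring] at hsw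
      exact hs_ne hsw
    have hnw0 : (-w) ≠ 0 := neg_ne_zero.mpr hw0
    have hprod0 : (m+n)*((2*m-n)*(m-2*n)) ≠ 0 := by
      rw [hF]; exact mul_ne_zero two_ne_zero (pow_ne_zero _ hnw0)
    have hF10 : m + n ≠ 0 := fun h' => hprod0 (by rw [h']; ring)
    have hF20 : 2*m - n ≠ 0 := fun h' => hprod0 (by
      have hrw : (m+n)*((2*m-n)*(m-2*n)) = (2*m-n)*((m+n)*(m-2*n)) := by ring
      rw [hrw, h']; ring)
    have hF30 : m - 2*n ≠ 0 := fun h' => hprod0 (by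
      have hrw : (m+n)*((2*m-n)*(m-2*n)) = (m-2*n)*((m+n)*(2*m-n)) := by ring
      rw [hrw, h']; ring)
    have hcop_mn : ∀ p : ℤ, Prime p → p ∣ m → p ∣ n → False := by
      intro p hp hpm hpn
      have hpA : p ∣ (m^3 - 3*m*n^2 + n^3) := by
        have hrw : m^3 - 3*m*n^2 + n^3 = m*(m^2 - 3*n^2) + n*n^2 := by ring
        rw [hrw]; exact dvd_add (Dvd.dvd.mul_right hpm _) (Dvd.dvd.mul_right hpn _)
      have hpy : p ∣ y := by rw [hyv]; exact (dvd_neg).mpr hpA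
      have hpx : p ∣ x := by
        rw [hxv]
        refine dvd_sub ?_ hpA
        have hrw : 3*m^2*n - 3*m*n^2 = m*(3*m*n - 3*n^2) := by ring
        rw [hrw]; exact Dvd.dvd.mul_right hpm _
      exact hp.not_unit (hco.isUnit_of_dvd' hpx hpy)
    have hker : ∀ p : ℤ, Prime p → p ∣ 3*m → p ∣ 3*n →
        p ∣ (m+n)*((2*m-n)*(m-2*n)) → False := by
      intro p hp h3m h3n hpprod
      have hnot3 : ¬ p ∣ 3 := by
        intro h'
        have hp3 : p.natAbs = 3 :=
          (Nat.prime_dvd_prime_iff_eq (Int.prime_iff_natAbs_prime.mp hp) (by norm_num)).mp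
            (by exact_mod_cast Int.natAbs_dvd_natAbs.mpr h')
        have hx' : ((p.natAbs : ℤ)) ∣ (m+n)*((2*m-n)*(m-2*n)) := Int.natAbs_dvd.mpr hpprod
        rw [hp3] at hx'
        have h3prod : (3:ℤ) ∣ (m+n)*((2*m-n)*(m-2*n)) := by exact_mod_cast hx'
        have hproj : (m+n)*((2*m-n)*(m-2*n)) = -(x+y) := by
          linear_combination hF + hsw
        rw [hproj] at h3prod
        exact h3sA ((dvd_neg).mp h3prod)
      have hpm : p ∣ m := ((hp.dvd_mul.mp h3m).resolve_left hnot3)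
      have hpn : p ∣ n := ((hp.dvd_mul.mp h3n).resolve_left hnot3)
      exact hcop_mn p hp hpm hpn
    have hcoF12 : IsCoprime (m+n) (2*m-n) := isCoprime_of_no_prime (by
      intro p hp h1' h2'
      refine hker p hp ?_ ?_ ?_
      · have := dvd_add h1' h2'
        rwa [show (m+n)+(2*m-n) = 3*m from by ring] at this
      · have := dvd_sub (Dvd.dvd.mul_left h1' 2) h2'
        rwa [show 2*(m+n)-(2*m-n) = 3*n from by ring] at this
      · exact Dvd.dvd.mul_right h1' _)
    have hcoF13 : IsCoprime (m+n) (m-2*n) := isCoprime_of_no_prime (by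
      intro p hp h1' h2'
      refine hker p hp ?_ ?_ ?_
      · have := dvd_add (Dvd.dvd.mul_left h1' 2) h2'
        rwa [show 2*(m+n)+(m-2*n) = 3*m from by ring] at this
      · have := dvd_sub h1' h2'
        rwa [show (m+n)-(m-2*n) = 3*n from by ring] at this
      · exact Dvd.dvd.mul_left (Dvd.dvd.mul_left h2' _) _)
    have hcoF23 : IsCoprime (2*m-n) (m-2*n) := isCoprime_of_no_prime (by
      intro p hp h1' h2'
      refine hker p hp ?_ ?_ ?_
      · have := dvd_sub (Dvd.dvd.mul_left h1' 2) h2'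
        rwa [show 2*(2*m-n)-(m-2*n) = 3*m from by ring] at this
      · have := dvd_sub h1' (Dvd.dvd.mul_left h2' 2)
        rwa [show (2*m-n)-2*(m-2*n) = 3*n from by ring] at this
      · exact Dvd.dvd.mul_left (Dvd.dvd.mul_right h1' _) _)
    have hzwt : z^3 = w^3*t^3 := by
      have h2' : 2*(z^3) = 2*(w^3*t^3) := by
        rw [hsw, ht] at hsN; linear_combination -hsN
      exact mul_left_cancel₀ two_ne_zero h2'
    have hzabs : z.natAbs^3 = w.natAbs^3 * t.natAbs^3 := by
      calc z.natAbs^3 = (z^3).natAbs := (Int.natAbs_pow z 3).symm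
        _ = (w^3*t^3).natAbs := by rw [hzwt]
        _ = w.natAbs^3*t.natAbs^3 := by
            rw [Int.natAbs_mul, Int.natAbs_pow, Int.natAbs_pow]
    have hwz : 2*w.natAbs ≤ z.natAbs := by
      have hle : (2*w.natAbs)^3 ≤ z.natAbs^3 := by
        calc (2*w.natAbs)^3 = 8 * w.natAbs^3 := by ring
          _ ≤ t.natAbs^3 * w.natAbs^3 := Nat.mul_le_mul_right _ (by
              calc (8:ℕ) = 2^3 := by norm_num
                _ ≤ t.natAbs^3 := Nat.pow_le_pow_left ht2 3)
          _ = z.natAbs^3 := by rw [hzabs]; ring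
      exact (Nat.pow_le_pow_iff_left (by norm_num : 3 ≠ 0)).mp hle
    have hw1 : 1 ≤ w.natAbs := Int.natAbs_pos.mpr hw0
    rcases Int.even_or_odd (m+n) with hF1e | hF1o
    · obtain ⟨e, f, g, hE, hf2, hg2⟩ := split3 hcoF12 hcoF13 hcoF23 hF hF1e
      have he0 : e ≠ 0 := fun h' => hF10 (by rw [hE, h']; ring)
      have hewle : e.natAbs ≤ w.natAbs := by
        have hle := natAbs_cube_le (P := (m+n)*((2*m-n)*(m-2*n)))
          (by rw [← hE]; exact dvd_mul_right _ _) hF hprod0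
        rwa [Int.natAbs_neg] at hle
      have hsize : e.natAbs < N := by omega
      have hnew : f^3 + (-g)^3 = 2*e^3 := by
        rw [← hE]; linear_combination hg2 - hf2
      have hcofg : IsCoprime f (-g) :=
        (coprime_of_cube (by rw [← hf2, ← hg2]; exact hcoF23)).neg_right
      have hfg := IH e.natAbs hsize f (-g) e rfl hnew hcofg he0
      have hmeq : m = n := by
        have h1' : 2*m-n = -(m-2*n) := by
          linear_combination hf2 + hg2 + (f^2 - f*g + g^2)*hfg
        omega
      rw [hxv, hyv, hmeq]; ring
    · rcases Int.even_or_odd (2*m-n) with hF2e | hF2o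
      · have hF' : (2*m-n)*((m+n)*(m-2*n)) = 2*(-w)^3 := by linear_combination hF
        obtain ⟨e, f, g, hE, hf2, hg2⟩ := split3 hcoF12.symm hcoF23 hcoF13 hF' hF2e
        have he0 : e ≠ 0 := fun h' => hF20 (by rw [hE, h']; ring)
        have hewle : e.natAbs ≤ w.natAbs := by
          have hle := natAbs_cube_le (P := (m+n)*((2*m-n)*(m-2*n)))
            (by rw [← hE]; exact ⟨(m+n)*(m-2*n), by ring⟩) hF hprod0
          rwa [Int.natAbs_neg] at hle
        have hsize : e.natAbs < N := by omega
        have hnew : f^3 + g^3 = 2*e^3 := by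
          linear_combination hE - hf2 - hg2
        have hcofg : IsCoprime f g :=
          coprime_of_cube (by rw [← hf2, ← hg2]; exact hcoF13)
        have hfg := IH e.natAbs hsize f g e rfl hnew hcofg he0
        have hneq : n = 0 := by
          have h1' : m+n = m-2*n := by
            linear_combination hf2 - hg2 + (f^2 + f*g + g^2)*hfg
          omega
        rw [hxv, hyv, hneq]; ring
      · have hF3e : Even (m-2*n) := by
          have hever : Even ((m+n)*((2*m-n)*(m-2*n))) := by
            rw [hF]; exact ⟨(-w)^3, by ring⟩
          rcases Int.even_or_odd (m-2*n) with h' | h'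
          · exact h'
          · exfalso
            have hodd : Odd ((m+n)*((2*m-n)*(m-2*n))) := hF1o.mul (hF2o.mul h')
            exact (Int.not_odd_iff_even.mpr hever) hodd
        have hF' : (m-2*n)*((m+n)*(2*m-n)) = 2*(-w)^3 := by linear_combination hF
        obtain ⟨e, f, g, hE, hf2, hg2⟩ := split3 hcoF13.symm hcoF23.symm hcoF12 hF' hF3e
        have he0 : e ≠ 0 := fun h' => hF30 (by rw [hE, h']; ring)
        have hewle : e.natAbs ≤ w.natAbs := by
          have hle := natAbs_cube_le (P := (m+n)*((2*m-n)*(m-2*n)))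
            (by rw [← hE]; exact ⟨(m+n)*(2*m-n), by ring⟩) hF hprod0
          rwa [Int.natAbs_neg] at hle
        have hsize : e.natAbs < N := by omega
        have hnew : g^3 + (-f)^3 = 2*e^3 := by
          linear_combination hf2 - hg2 + hE
        have hcofg : IsCoprime g (-f) :=
          (coprime_of_cube (by rw [← hg2, ← hf2]; exact hcoF12.symm)).neg_right
        have hfg := IH e.natAbs hsize g (-f) e rfl hnew hcofg he0
        have hmeq : m = 0 := by
          have h1' : 2*m-n = -(m+n) := by
            linear_combination hg2 + hf2 + (g^2 - g*f + f^2)*hfg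
          omega
        rw [hxv, hyv, hmeq]; ring



end Descent

/-- The `P³₁`-set `{1, 2, 13}` is nonextendible: there is no positive integer
`d ∉ {1, 2, 13}` such that the product of any three pairwise distinct elements of
`{1, 2, 13, d}` increased by one is a perfect cube. -/
theorem one_two_thirteen_nonextendible :
    ¬ ∃ d : ℕ, 0 < d ∧ d ∉ ({1, 2, 13} : Set ℕ) ∧
      ∀ x ∈ ({1, 2, 13, d} : Set ℕ), ∀ y ∈ ({1, 2, 13, d} : Set ℕ),
        ∀ z ∈ ({1, 2, 13, d} : Set ℕ), x ≠ y → x ≠ z → y ≠ z →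
          ∃ m : ℕ, 0 < m ∧ x * y * z + 1 = m ^ 3 := by
  rintro ⟨d, hd0, hdnot, H⟩
  simp only [Set.mem_insert_iff, Set.mem_singleton_iff, not_or] at hdnot
  obtain ⟨hd1, hd2, hd13⟩ := hdnot
  have hmem1 : (1:ℕ) ∈ ({1, 2, 13, d} : Set ℕ) := by simp
  have hmem2 : (2:ℕ) ∈ ({1, 2, 13, d} : Set ℕ) := by simp
  have hmem13 : (13:ℕ) ∈ ({1, 2, 13, d} : Set ℕ) := by simp
  have hmemd : d ∈ ({1, 2, 13, d} : Set ℕ) := by simp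
  obtain ⟨b, hb0, hb⟩ := H 1 hmem1 13 hmem13 d hmemd (by norm_num)
    (fun h' => hd1 h'.symm) (fun h' => hd13 h'.symm)
  obtain ⟨c, hc0, hc⟩ := H 2 hmem2 13 hmem13 d hmemd (by norm_num)
    (fun h' => hd2 h'.symm) (fun h' => hd13 h'.symm)
  -- b³ = 13 d + 1,  c³ = 26 d + 1
  have hb' : (13*(d:ℤ)+1) = (b:ℤ)^3 := by exact_mod_cast hb
  have hc' : (26*(d:ℤ)+1) = (c:ℤ)^3 := by
    have : (2*13*(d:ℤ)+1) = (c:ℤ)^3 := by exact_mod_cast hc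
    linarith
  have key : (c:ℤ)^3 + 1^3 = 2*(b:ℤ)^3 := by linear_combination 2*hb' - hc'
  have hbz : (b:ℤ) ≠ 0 := by exact_mod_cast hb0.ne'
  have hcop : IsCoprime ((c:ℤ)) (1:ℤ) := isCoprime_one_right
  have hc1 : (c:ℤ) = 1 := cubes_ap (b:ℤ).natAbs (c:ℤ) 1 (b:ℤ) rfl key hcop hbz
  have : (26*(d:ℤ)+1) = 1 := by rw [hc', hc1]; norm_num
  have : (d:ℤ) = 0 := by linarith
  omega
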